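/- Let L_2 = {0, 1} be the two-element meet-semilattice (with 0·0 = 0·1 = 1·0 = 0 and 1·1 = 1), and let L_2^∞ be its countable direct power. The system of equations S = { x · c_n = x : n ≥ 0 }, where c_n is the sequence with 0 in the first n coordinates and 1 elsewhere, has solution set exactly {(0,0,0,...)} in L_2^∞, but for every n the solution set of the first n equations of S is the set of all sequences whose first n coordinates are 0. In particular, S is not equivalent over L_2^∞ to any finite subsystem, so L_2^∞ is not equationally Noetherian. -/
import Mathlib


/-- The constant sequence `c_n` of the two-element semilattice `L₂ = {0, 1}`
(modelled as `Bool` with `·` = `&&` = min), with `0` (`false`) in the first `n`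
coordinates and `1` (`true`) elsewhere. -/
def c (n : ℕ) : ℕ → Bool := fun i => if i < n then false else true

/-- The `n`-th equation `x · c_n = x` of the system `S`, as a predicate on `L₂^∞`. -/
def Eqn (n : ℕ) (v : ℕ → Bool) : Prop := ∀ i, (v i && c n i) = v i

lemma eqn_iff (n : ℕ) (v : ℕ → Bool) : Eqn n v ↔ ∀ i < n, v i = false := by
  constructor
  · intro h i hi
    have := h i
    simp [c, hi] at this
    exact this
  · intro h i
    by_cases hi : i < n
    · simp [c, hi, h i hi]
    · simp [c, hi]

/-- Over the countable direct power `L₂^∞` of the two-element semilattice, the system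
`S = {x · c_n = x : n ≥ 0}` has solution set exactly `{(0,0,0,...)}`, the first `n`
equations (`c_1, ..., c_n`) have solution set the sequences vanishing in the first `n`
coordinates, and `S` is not equivalent to any finite subsystem; so `L₂^∞` is not
equationally Noetherian. -/
theorem L2_power_not_equationally_noetherian :
    ({v : ℕ → Bool | ∀ n, Eqn n v} = {fun _ => false}) ∧
    (∀ n : ℕ, {v : ℕ → Bool | ∀ m, 1 ≤ m → m ≤ n → Eqn m v} =
      {v : ℕ → Bool | ∀ i < n, v i = false}) ∧
    (∀ N : Set ℕ, N.Finite →
      {v : ℕ → Bool | ∀ n ∈ N, Eqn n v} ≠ {v : ℕ → Bool | ∀ n, Eqn n v}) := by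
  refine ⟨?_, ?_, ?_⟩
  · ext v
    simp only [Set.mem_setOf_eq, Set.mem_singleton_iff]
    constructor
    · intro h
      funext i
      exact (eqn_iff (i+1) v).1 (h (i+1)) i (Nat.lt_succ_self i)
    · intro h n
      subst h
      simp [Eqn]
  · intro n
    ext v
    simp only [Set.mem_setOf_eq]
    constructor
    · intro h i hi
      exact (eqn_iff n v).1 ((h n (by omega) le_rfl)) i hi
    · intro h m _ hmn
      exact (eqn_iff m v).2 fun i hi => h i (lt_of_lt_of_le hi hmn)
  · intro N hN hEq
    obtain ⟨M, hM⟩ := hN.bddAbove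
    have hv : c M ∈ {v : ℕ → Bool | ∀ n ∈ N, Eqn n v} := by
      intro n hn
      exact (eqn_iff n (c M)).2 fun i hi => by
        simp [c, lt_of_lt_of_le hi (hM hn)]
    rw [hEq] at hv
    have := (eqn_iff (M+1) (c M)).1 (hv (M+1)) M (Nat.lt_succ_self M)
    simp [c] at this
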